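/- arXiv:2302.12934 — 2 statements merged into one kernel-verified Lean document; each statement's English description precedes it below -/
import Mathlib

section
/- Let Λ ⊆ [0,1]^d be the attractor of an IFS of injective contractions, non-degenerated in the sense that Λ is not contained in the boundary ∂[0,1]^d's faces, and suppose there exists δ > 0 and a δ-connected component X of Λ with X ∩ ∂[0,1]^d = ∅. Then Λ admits an island, i.e., a nonempty subset F of Λ that is both open and closed in Λ and satisfies F ∩ ∂[0,1]^d = ∅. -/
/-- Ambient `δ`-chain relation: `x` and `y` are joined by a chain of points of `Λ`
with consecutive distances `≤ δ`. -/
def aRel {X : Type*} [PseudoMetricSpace X] (Λ : Set X) (δ : ℝ) (x y : X) : Prop :=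
  Relation.ReflTransGen (fun a b : X => a ∈ Λ ∧ b ∈ Λ ∧ dist a b ≤ δ) x y

/-- `C` is a `δ`-connected component of `Λ`. -/
def IsDeltaComp {X : Type*} [PseudoMetricSpace X] (Λ : Set X) (δ : ℝ) (C : Set X) : Prop :=
  ∃ x ∈ Λ, C = {y | y ∈ Λ ∧ aRel Λ δ x y}

theorem island_of_component_avoiding_boundary {d : ℕ} {D : Type*} [Fintype D]
    (φ : D → (Fin d → ℝ) → (Fin d → ℝ))
    (r : D → NNReal) (hr : ∀ a, r a < 1) (hlip : ∀ a, LipschitzWith (r a) (φ a))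
    (hinj : ∀ a, Function.Injective (φ a))
    (Λ : Set (Fin d → ℝ)) (hΛc : IsCompact Λ) (hΛne : Λ.Nonempty)
    (hattr : Λ = ⋃ a, φ a '' Λ)
    (hΛcube : Λ ⊆ Set.Icc (0 : Fin d → ℝ) 1)
    (hnondeg : ¬ Λ ⊆ frontier (Set.Icc (0 : Fin d → ℝ) 1))
    (δ : ℝ) (hδ : 0 < δ) (X : Set (Fin d → ℝ))
    (hX : IsDeltaComp Λ δ X)
    (hXb : X ∩ frontier (Set.Icc (0 : Fin d → ℝ) 1) = ∅) :
    ∃ F : Set (Fin d → ℝ), F.Nonempty ∧ F ⊆ Λ ∧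
      IsClopen (Subtype.val ⁻¹' F : Set Λ) ∧
      F ∩ frontier (Set.Icc (0 : Fin d → ℝ) 1) = ∅ := by
  obtain ⟨x, hxΛ, hXdef⟩ := hX
  -- membership in X for points of Λ is equivalent to the chain relation
  have hmem : ∀ y : Λ, (y : Fin d → ℝ) ∈ X ↔ aRel Λ δ x y := by
    intro y
    rw [hXdef]
    exact ⟨fun h => h.2, fun h => ⟨y.2, h⟩⟩
  -- the preimage set is open
  have hopen : IsOpen (Subtype.val ⁻¹' X : Set Λ) := by
    rw [Metric.isOpen_iff]
    intro y hy
    refine ⟨δ, hδ, fun z hz => ?_⟩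
    rw [Set.mem_preimage, hmem]
    have hzy := Metric.mem_ball.1 hz
    rw [Subtype.dist_eq] at hzy
    have hyz : dist (y : Fin d → ℝ) (z : Fin d → ℝ) ≤ δ := by
      rw [dist_comm]; exact hzy.le
    exact ((hmem y).1 hy).tail ⟨y.2, z.2, hyz⟩
  have hopenc : IsOpen ((Subtype.val ⁻¹' X : Set Λ)ᶜ) := by
    rw [Metric.isOpen_iff]
    intro y hy
    refine ⟨δ, hδ, fun z hz hzX => ?_⟩
    apply hy
    rw [Set.mem_preimage, hmem]
    have hzy' := Metric.mem_ball.1 hz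
    rw [Subtype.dist_eq] at hzy'
    have hzy : dist (z : Fin d → ℝ) (y : Fin d → ℝ) ≤ δ := hzy'.le
    exact ((hmem z).1 hzX).tail ⟨z.2, y.2, hzy⟩
  refine ⟨X, ⟨x, ?_⟩, ?_, ⟨isOpen_compl_iff.1 hopenc, hopen⟩, hXb⟩
  · rw [hXdef]; exact ⟨hxΛ, Relation.ReflTransGen.refl⟩
  · rw [hXdef]; exact fun y hy => hy.1
end

section
/- Let H ⊆ ℝ^d be a set contained in a product of intervals so that the d-th coordinate of H has diameter at most δ/2 (more generally, suppose for all x,y ∈ H, |x−y|² ≤ |π(x)−π(y)|² + (δ/2)², where π : ℝ^d → ℝ^{d−1} is the projection forgetting the last coordinate). Then for any 0 < ε ≤ δ/2 with ε² + (δ/2)² ≤ δ², if π(x) and π(y) lie in the same ε-connected component of π(H), then x and y lie in the same δ-connected component of H; consequently h_H(δ) ≤ h_{π(H)}(ε). -/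
/-- Two points of `E` are connected by a `δ`-chain within `E`. -/
def chainRel {X : Type*} [PseudoMetricSpace X] (E : Set X) (δ : ℝ) (x y : E) : Prop :=
  Relation.ReflTransGen (fun a b : E => dist (a : X) (b : X) ≤ δ) x y

/-- The number (cardinality) of `δ`-connected components of `E`. -/
noncomputable def hComp {X : Type*} [PseudoMetricSpace X] (E : Set X) (δ : ℝ) : Cardinal :=
  Cardinal.mk (Quot (chainRel E δ))

theorem hComp_le_of_thin_fiber {X Y : Type u} [PseudoMetricSpace X] [PseudoMetricSpace Y]
    (π : X → Y) (H : Set X) (δ ε : ℝ)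
    (hthin : ∀ x ∈ H, ∀ y ∈ H, dist x y ^ 2 ≤ dist (π x) (π y) ^ 2 + (δ / 2) ^ 2)
    (hε0 : 0 < ε) (hεδ : ε ≤ δ / 2) (hpyth : ε ^ 2 + (δ / 2) ^ 2 ≤ δ ^ 2) :
    (∀ x y : H,
        chainRel (π '' H) ε ⟨π x, Set.mem_image_of_mem π x.2⟩
          ⟨π y, Set.mem_image_of_mem π y.2⟩ →
        chainRel H δ x y) ∧
    hComp H δ ≤ hComp (π '' H) ε := by
  have hδ : 0 < δ := by linarith
  have key : ∀ a ∈ H, ∀ b ∈ H, dist (π a) (π b) ≤ ε → dist a b ≤ δ := by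
    intro a ha b hb hd
    have h1 := hthin a ha b hb
    have h2 : dist (π a) (π b) ^ 2 ≤ ε ^ 2 := by
      nlinarith [dist_nonneg (x := π a) (y := π b)]
    nlinarith [dist_nonneg (x := a) (y := b)]
  have main : ∀ p q : ↑(π '' H), chainRel (π '' H) ε p q →
      ∀ (a : H), π a = (p : Y) → ∀ (b : H), π b = (q : Y) → chainRel H δ a b := by
    intro p q h
    induction h with
    | refl =>
      intro a hpa b hpb
      refine Relation.ReflTransGen.single ?_
      apply key a a.2 b b.2
      rw [hpa, hpb]
      simp
      linarith
    | @tail c q' hstep hlast ih =>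
      intro a hpa b hpb
      obtain ⟨m, hm, hmeq⟩ := c.2
      refine Relation.ReflTransGen.tail (ih a hpa ⟨m, hm⟩ hmeq) ?_
      apply key m hm b b.2
      rw [hmeq, hpb]
      exact hlast
  let pre : ∀ p : ↑(π '' H), H := fun p => ⟨p.2.choose, p.2.choose_spec.1⟩
  have hpre : ∀ p, π (pre p) = (p : Y) := fun p => p.2.choose_spec.2
  refine ⟨fun x y h => main _ _ h x rfl y rfl, ?_⟩
  have hsurj : Function.Surjective
      (Quot.lift (fun p : ↑(π '' H) => Quot.mk (chainRel H δ) (pre p))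
        (fun p q h => Quot.sound (main p q h (pre p) (hpre p) (pre q) (hpre q)))) := by
    intro z
    obtain ⟨x, rfl⟩ := Quot.exists_rep z
    refine ⟨Quot.mk _ ⟨π x, Set.mem_image_of_mem π x.2⟩, ?_⟩
    apply Quot.sound
    refine Relation.ReflTransGen.single ?_
    apply key _ (pre ⟨π x, Set.mem_image_of_mem π x.2⟩).2 _ x.2
    rw [hpre]
    simp
    linarith
  exact Cardinal.mk_le_of_surjective hsurj
end
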